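/- Fix an element a ∈ {1,…,6}. For any two fixed-point-free involutions ρ1 and ρ2 of {1,…,6}, there exists an even permutation g of {1,…,6} with g(a) = a and g ρ1 g⁻¹ = ρ2. In other words, the standard subgroup A5 ⊂ S6 (even permutations fixing a point) acts transitively by conjugation on the 15 fixed-point-free involutions. (Corollary A.2, first part: every standard subgroup A5 of S6 acts transitively on the set of 15 lines of the Cremona–Richmond configuration.) -/

import Mathlib

set_option maxRecDepth 10000

private def ρ0 : Equiv.Perm (Fin 6) := Equiv.swap 0 1 * Equiv.swap 2 3 * Equiv.swap 4 5

private def fpfList : List (Equiv.Perm (Fin 6)) :=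
  [Equiv.swap (0:Fin 6) 1 * Equiv.swap (2:Fin 6) 3 * Equiv.swap (4:Fin 6) 5,
   Equiv.swap (0:Fin 6) 1 * Equiv.swap (2:Fin 6) 4 * Equiv.swap (3:Fin 6) 5,
   Equiv.swap (0:Fin 6) 1 * Equiv.swap (2:Fin 6) 5 * Equiv.swap (3:Fin 6) 4,
   Equiv.swap (0:Fin 6) 2 * Equiv.swap (1:Fin 6) 3 * Equiv.swap (4:Fin 6) 5,
   Equiv.swap (0:Fin 6) 2 * Equiv.swap (1:Fin 6) 4 * Equiv.swap (3:Fin 6) 5,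
   Equiv.swap (0:Fin 6) 2 * Equiv.swap (1:Fin 6) 5 * Equiv.swap (3:Fin 6) 4,
   Equiv.swap (0:Fin 6) 3 * Equiv.swap (1:Fin 6) 2 * Equiv.swap (4:Fin 6) 5,
   Equiv.swap (0:Fin 6) 3 * Equiv.swap (1:Fin 6) 4 * Equiv.swap (2:Fin 6) 5,
   Equiv.swap (0:Fin 6) 3 * Equiv.swap (1:Fin 6) 5 * Equiv.swap (2:Fin 6) 4,
   Equiv.swap (0:Fin 6) 4 * Equiv.swap (1:Fin 6) 2 * Equiv.swap (3:Fin 6) 5,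
   Equiv.swap (0:Fin 6) 4 * Equiv.swap (1:Fin 6) 3 * Equiv.swap (2:Fin 6) 5,
   Equiv.swap (0:Fin 6) 4 * Equiv.swap (1:Fin 6) 5 * Equiv.swap (2:Fin 6) 3,
   Equiv.swap (0:Fin 6) 5 * Equiv.swap (1:Fin 6) 2 * Equiv.swap (3:Fin 6) 4,
   Equiv.swap (0:Fin 6) 5 * Equiv.swap (1:Fin 6) 3 * Equiv.swap (2:Fin 6) 4,
   Equiv.swap (0:Fin 6) 5 * Equiv.swap (1:Fin 6) 4 * Equiv.swap (2:Fin 6) 3]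

private lemma mem_fpfList : ∀ ρ : Equiv.Perm (Fin 6), ρ * ρ = 1 → (∀ i, ρ i ≠ i) →
    ρ ∈ fpfList := by decide

private lemma key (ρ : Equiv.Perm (Fin 6)) (h : ρ * ρ = 1 ∧ ∀ i, ρ i ≠ i) :
    ∃ g : Equiv.Perm (Fin 6), g 0 = 0 ∧ Equiv.Perm.sign g = 1 ∧ g * ρ0 * g⁻¹ = ρ := by
  have hm := mem_fpfList ρ h.1 h.2
  simp only [fpfList, List.mem_cons, List.not_mem_nil, or_false] at hm
  rcases hm with rfl|rfl|rfl|rfl|rfl|rfl|rfl|rfl|rfl|rfl|rfl|rfl|rfl|rfl|rfl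
  · exact ⟨1, by decide, by decide, by decide⟩
  · exact ⟨Equiv.swap (4:Fin 6) 5 * Equiv.swap (3:Fin 6) 5, by decide, by decide, by decide⟩
  · exact ⟨Equiv.swap (4:Fin 6) 5 * Equiv.swap (3:Fin 6) 4, by decide, by decide, by decide⟩
  · exact ⟨Equiv.swap (1:Fin 6) 2 * Equiv.swap (4:Fin 6) 5, by decide, by decide, by decide⟩
  · exact ⟨Equiv.swap (1:Fin 6) 2 * Equiv.swap (3:Fin 6) 4, by decide, by decide, by decide⟩
  · exact ⟨Equiv.swap (1:Fin 6) 2 * Equiv.swap (3:Fin 6) 5, by decide, by decide, by decide⟩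
  · exact ⟨Equiv.swap (2:Fin 6) 3 * Equiv.swap (1:Fin 6) 2, by decide, by decide, by decide⟩
  · exact ⟨Equiv.swap (4:Fin 6) 5 * Equiv.swap (3:Fin 6) 5 * Equiv.swap (2:Fin 6) 5 *
      Equiv.swap (1:Fin 6) 2, by decide, by decide, by decide⟩
  · exact ⟨Equiv.swap (4:Fin 6) 5 * Equiv.swap (3:Fin 6) 4 * Equiv.swap (2:Fin 6) 4 *
      Equiv.swap (1:Fin 6) 2, by decide, by decide, by decide⟩
  · exact ⟨Equiv.swap (4:Fin 6) 5 * Equiv.swap (3:Fin 6) 5 * Equiv.swap (2:Fin 6) 3 *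
      Equiv.swap (1:Fin 6) 2, by decide, by decide, by decide⟩
  · exact ⟨Equiv.swap (2:Fin 6) 4 * Equiv.swap (1:Fin 6) 2, by decide, by decide, by decide⟩
  · exact ⟨Equiv.swap (4:Fin 6) 5 * Equiv.swap (3:Fin 6) 4 * Equiv.swap (2:Fin 6) 5 *
      Equiv.swap (1:Fin 6) 2, by decide, by decide, by decide⟩
  · exact ⟨Equiv.swap (4:Fin 6) 5 * Equiv.swap (3:Fin 6) 4 * Equiv.swap (2:Fin 6) 3 *
      Equiv.swap (1:Fin 6) 2, by decide, by decide, by decide⟩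
  · exact ⟨Equiv.swap (2:Fin 6) 5 * Equiv.swap (1:Fin 6) 2, by decide, by decide, by decide⟩
  · exact ⟨Equiv.swap (4:Fin 6) 5 * Equiv.swap (3:Fin 6) 5 * Equiv.swap (2:Fin 6) 4 *
      Equiv.swap (1:Fin 6) 2, by decide, by decide, by decide⟩

/-- Corollary A.2 (first part): the standard subgroup A5 ⊂ S6 of even permutations fixing a
chosen point a acts transitively by conjugation on the 15 fixed-point-free involutions of
{1,…,6}, i.e. on the 15 lines of the Cremona–Richmond configuration. -/
theorem standard_A5_transitive_on_fpf_involutions (a : Fin 6) (ρ₁ ρ₂ : Equiv.Perm (Fin 6))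
    (h₁ : ρ₁ * ρ₁ = 1 ∧ ∀ i, ρ₁ i ≠ i) (h₂ : ρ₂ * ρ₂ = 1 ∧ ∀ i, ρ₂ i ≠ i) :
    ∃ g : Equiv.Perm (Fin 6), Equiv.Perm.sign g = 1 ∧ g a = a ∧ g * ρ₁ * g⁻¹ = ρ₂ := by
  set σ : Equiv.Perm (Fin 6) := Equiv.swap 0 a with hσ
  have hσ0 : σ 0 = a := Equiv.swap_apply_left 0 a
  have conjfpf : ∀ ρ : Equiv.Perm (Fin 6), (ρ * ρ = 1 ∧ ∀ i, ρ i ≠ i) →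
      (σ⁻¹ * ρ * σ) * (σ⁻¹ * ρ * σ) = 1 ∧ ∀ i, (σ⁻¹ * ρ * σ) i ≠ i := by
    intro ρ ⟨hi, hf⟩
    constructor
    · have : (σ⁻¹ * ρ * σ) * (σ⁻¹ * ρ * σ) = σ⁻¹ * (ρ * ρ) * σ := by group
      rw [this, hi]; group
    · intro i hfix
      apply hf (σ i)
      have := congrArg σ hfix
      simpa [Equiv.Perm.mul_apply] using this
  obtain ⟨g₁, hg₁0, hg₁s, hg₁c⟩ := key (σ⁻¹ * ρ₁ * σ) (conjfpf ρ₁ h₁)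
  obtain ⟨g₂, hg₂0, hg₂s, hg₂c⟩ := key (σ⁻¹ * ρ₂ * σ) (conjfpf ρ₂ h₂)
  refine ⟨σ * g₂ * g₁⁻¹ * σ⁻¹, ?_, ?_, ?_⟩
  · simp [Equiv.Perm.sign_mul, hg₁s, hg₂s]
  · have h3 : σ⁻¹ a = 0 := by rw [← hσ0]; simp
    have h1 : g₁⁻¹ (0 : Fin 6) = 0 := by
      nth_rewrite 1 [← hg₁0]; exact g₁.symm_apply_apply 0
    simp only [Equiv.Perm.mul_apply]
    rw [h3, h1, hg₂0, hσ0]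
  · have e₁ : σ⁻¹ * ρ₁ * σ = g₁ * ρ0 * g₁⁻¹ := hg₁c.symm
    have hρ₁ : ρ₁ = σ * (g₁ * ρ0 * g₁⁻¹) * σ⁻¹ := by
      rw [← e₁]; group
    have e₂ : σ * (g₂ * ρ0 * g₂⁻¹) * σ⁻¹ = ρ₂ := by rw [hg₂c]; group
    rw [hρ₁, ← e₂]; group
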